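/- arXiv:1512.02033 — 3 statements merged into one kernel-verified Lean document; each statement's English description precedes it below -/
import Mathlib

section
/- The orbit loss equals the expectation of a perturbed sign indicator: Let w ∈ EuclideanSpace ℝ (Fin d), y ∈ Y, and let ŷ be a maximizer for w with y ≠ ŷ and ψ y ≠ ψ ŷ. Then μ₁{z : z > ⟪w, δψ(y, ŷ)⟫} · ℓ(y, ŷ) = μ_d{ε : ⟪w + ε, δψ(y, ŷ)⟫ < 0} · ℓ(y, ŷ). -/
open MeasureTheory ProbabilityTheory
open scoped InnerProductSpace ENNReal

/-- The standard Gaussian measure on `EuclideanSpace ℝ (Fin d)`. -/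
noncomputable def stdGaussianE (d : ℕ) : Measure (EuclideanSpace ℝ (Fin d)) :=
  (Measure.pi fun _ : Fin d => gaussianReal 0 1).map
    (MeasurableEquiv.toLp 2 (Fin d → ℝ))

/-- The normalized feature difference `δψ(y, y')`. -/
noncomputable def deltaFeat {d : ℕ} {Y : Type*} [DecidableEq Y]
    (ψ : Y → EuclideanSpace ℝ (Fin d)) (y y' : Y) : EuclideanSpace ℝ (Fin d) :=
  if y = y' then 0 else ‖ψ y - ψ y'‖⁻¹ • (ψ y - ψ y')

section Aux

open Set

lemma aux_map_withDensity {α β : Type*} [MeasurableSpace α] [MeasurableSpace β]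
    (e : α ≃ᵐ β) (μ : Measure α) (f : β → ℝ≥0∞) (hf : Measurable f) :
    (μ.withDensity (fun a => f (e a))).map e = (μ.map e).withDensity f := by
  ext s hs
  rw [Measure.map_apply e.measurable hs, withDensity_apply _ hs,
    withDensity_apply _ (e.measurable hs),
    Measure.restrict_map e.measurable hs, lintegral_map hf e.measurable]

lemma aux_lintegral_pi : ∀ {n : ℕ} (μ : Fin n → Measure ℝ) [∀ i, SigmaFinite (μ i)]
    (f : Fin n → ℝ → ℝ≥0∞), (∀ i, Measurable (f i)) →
    ∫⁻ x : Fin n → ℝ, ∏ i, f i (x i) ∂Measure.pi μ = ∏ i, ∫⁻ t, f i t ∂(μ i) := by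
  intro n
  induction n with
  | zero => intro μ _ f hf; simp [lintegral_one, Measure.pi_univ]
  | succ n ih =>
    intro μ _ f hf
    have h := (measurePreserving_piFinSuccAbove μ 0).symm
    have hF : Measurable fun x : Fin (n + 1) → ℝ => ∏ i, f i (x i) :=
      Finset.measurable_prod _ fun i _ => (hf i).comp (measurable_pi_apply i)
    rw [← h.lintegral_comp hF]
    simp_rw [MeasurableEquiv.piFinSuccAbove_symm_apply, Fin.insertNthEquiv,
      Fin.prod_univ_succ, Fin.insertNth_zero, Equiv.coe_fn_mk, Fin.cons_succ,
      Fin.zero_succAbove, cast_eq, Fin.cons_zero]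
    have hmul := lintegral_prod_mul (μ := μ 0) (ν := Measure.pi fun j => μ j.succ)
      (f := f 0) (g := fun t : Fin n → ℝ => ∏ i : Fin n, f i.succ (t i))
      (hf 0).aemeasurable
      (Finset.measurable_prod _ fun i _ =>
        ((hf i.succ).comp (measurable_pi_apply i))).aemeasurable
    rw [hmul, ih (fun i => μ i.succ) (fun i => f i.succ) (fun i => hf i.succ)]

lemma aux_pi_gaussian (d : ℕ) :
    (Measure.pi fun _ : Fin d => gaussianReal 0 1) =
      (Measure.pi fun _ : Fin d => (volume : Measure ℝ)).withDensity
        (fun x => ∏ i, gaussianPDF 0 1 (x i)) := by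
  refine Measure.pi_eq fun s hs => ?_
  rw [withDensity_apply _ (MeasurableSet.univ_pi hs),
    ← lintegral_indicator (MeasurableSet.univ_pi hs) _]
  have hind : (Set.univ.pi s).indicator (fun x : Fin d → ℝ => ∏ i, gaussianPDF 0 1 (x i))
      = fun x => ∏ i, (s i).indicator (gaussianPDF 0 1) (x i) := by
    ext x
    by_cases hx : x ∈ Set.univ.pi s
    · rw [Set.indicator_of_mem hx]
      exact Finset.prod_congr rfl fun i _ =>
        (Set.indicator_of_mem (hx i trivial) _).symm
    · rw [Set.indicator_of_notMem hx]
      obtain ⟨j, hjs⟩ : ∃ j, x j ∉ s j := by simpa [Set.mem_pi] using hx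
      exact (Finset.prod_eq_zero (Finset.mem_univ j)
        (by simp [Set.indicator_of_notMem hjs])).symm
  rw [hind, aux_lintegral_pi _ _ (fun i => (measurable_gaussianPDF 0 1).indicator (hs i))]
  refine Finset.prod_congr rfl fun i _ => ?_
  rw [lintegral_indicator (hs i) _]
  exact (gaussianReal_apply 0 one_ne_zero (s i)).symm

lemma aux_radial {d : ℕ} (x : EuclideanSpace ℝ (Fin d)) :
    (∏ i, gaussianPDF 0 1 (x i)) =
      ENNReal.ofReal ((Real.sqrt (2 * Real.pi))⁻¹ ^ d * Real.exp (-‖x‖ ^ 2 / 2)) := by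
  have hnorm : ‖x‖ ^ 2 = ∑ i, (x i) ^ 2 := by
    rw [EuclideanSpace.norm_eq, Real.sq_sqrt (Finset.sum_nonneg fun i _ => sq_nonneg _)]
    simp [sq_abs]
  have hpdf : ∀ t : ℝ, gaussianPDFReal 0 1 t = (Real.sqrt (2 * Real.pi))⁻¹ *
      Real.exp (-(t ^ 2) / 2) := by
    intro t; simp [gaussianPDFReal]
  rw [show (fun i : Fin d => gaussianPDF 0 1 (x i)) = fun i =>
      ENNReal.ofReal (gaussianPDFReal 0 1 (x i)) from rfl]
  rw [← ENNReal.ofReal_prod_of_nonneg (fun i _ => gaussianPDFReal_nonneg 0 1 (x i))]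
  congr 1
  simp_rw [hpdf]
  rw [Finset.prod_mul_distrib, Finset.prod_const, ← Real.exp_sum]
  congr 2
  · simp
  · rw [hnorm, ← Finset.sum_div, ← Finset.sum_neg_distrib]

lemma aux_stdGaussian_withDensity (d : ℕ) :
    stdGaussianE d = (volume : Measure (EuclideanSpace ℝ (Fin d))).withDensity
      (fun x => ENNReal.ofReal ((Real.sqrt (2 * Real.pi))⁻¹ ^ d *
        Real.exp (-‖x‖ ^ 2 / 2))) := by
  have hf : Measurable fun x : EuclideanSpace ℝ (Fin d) =>
      ENNReal.ofReal ((Real.sqrt (2 * Real.pi))⁻¹ ^ d * Real.exp (-‖x‖ ^ 2 / 2)) := by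
    fun_prop
  have hcomp : (fun p : Fin d → ℝ =>
      ENNReal.ofReal ((Real.sqrt (2 * Real.pi))⁻¹ ^ d *
        Real.exp (-‖(MeasurableEquiv.toLp 2 (Fin d → ℝ)) p‖ ^ 2 / 2)))
      = fun p => ∏ i, gaussianPDF 0 1 (p i) := by
    funext p
    exact (aux_radial ((MeasurableEquiv.toLp 2 (Fin d → ℝ)) p)).symm
  rw [stdGaussianE, aux_pi_gaussian, ← hcomp,
    aux_map_withDensity (MeasurableEquiv.toLp 2 (Fin d → ℝ)) _ _ hf]
  congr 1
  rw [← MeasureTheory.volume_pi]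
  exact ((EuclideanSpace.volume_preserving_symm_measurableEquiv_toLp (Fin d)).symm
    (MeasurableEquiv.toLp 2 (Fin d → ℝ)).symm).map_eq

lemma aux_isometry_invariance (d : ℕ)
    (L : EuclideanSpace ℝ (Fin d) ≃ₗᵢ[ℝ] EuclideanSpace ℝ (Fin d)) :
    (stdGaussianE d).map L = stdGaussianE d := by
  have hf : Measurable fun x : EuclideanSpace ℝ (Fin d) =>
      ENNReal.ofReal ((Real.sqrt (2 * Real.pi))⁻¹ ^ d * Real.exp (-‖x‖ ^ 2 / 2)) := by
    fun_prop
  have hfun : (fun x : EuclideanSpace ℝ (Fin d) =>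
      ENNReal.ofReal ((Real.sqrt (2 * Real.pi))⁻¹ ^ d *
        Real.exp (-‖L.toMeasurableEquiv x‖ ^ 2 / 2)))
      = fun x => ENNReal.ofReal ((Real.sqrt (2 * Real.pi))⁻¹ ^ d *
        Real.exp (-‖x‖ ^ 2 / 2)) := by
    funext x
    rw [LinearIsometryEquiv.coe_toMeasurableEquiv, L.norm_map]
  nth_rewrite 1 [aux_stdGaussian_withDensity]
  rw [← hfun, ← LinearIsometryEquiv.coe_toMeasurableEquiv L,
    aux_map_withDensity L.toMeasurableEquiv volume _ hf,
    LinearIsometryEquiv.coe_toMeasurableEquiv, L.measurePreserving.map_eq,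
    ← aux_stdGaussian_withDensity]

lemma aux_marginal {d : ℕ} (i : Fin d) :
    (Measure.pi fun _ : Fin d => gaussianReal 0 1).map (fun x => x i) = gaussianReal 0 1 := by
  classical
  ext s hs
  rw [Measure.map_apply (measurable_pi_apply i) hs,
    show (fun x : Fin d → ℝ => x i) ⁻¹' s
      = Set.pi Set.univ (Function.update (fun _ => Set.univ) i s) from Set.eval_preimage,
    Measure.pi_pi]
  rw [Finset.prod_eq_single i (fun j _ hj => by
      rw [Function.update_of_ne hj]; exact measure_univ)
    (fun h => absurd (Finset.mem_univ i) h)]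
  rw [Function.update_self]

lemma aux_map_inner {d : ℕ} (hd : 0 < d) (u : EuclideanSpace ℝ (Fin d)) (hu : ‖u‖ = 1) :
    (stdGaussianE d).map (fun x => ⟪x, u⟫_ℝ) = gaussianReal 0 1 := by
  set i0 : Fin d := ⟨0, hd⟩
  obtain ⟨b, hb⟩ := Orthonormal.exists_orthonormalBasis_extension_of_card_eq
    (𝕜 := ℝ) (by simp) (v := fun _ : Fin d => u) (s := {i0})
    ⟨fun _ => hu, fun i j hij => absurd (Subtype.ext ((i.2 : (i : Fin d) ∈ _).trans
      ((j.2 : (j : Fin d) ∈ _).symm))) hij⟩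
  have hbu : b i0 = u := hb i0 rfl
  have hrepr : (fun x : EuclideanSpace ℝ (Fin d) => ⟪x, u⟫_ℝ)
      = (fun p : Fin d → ℝ => p i0) ∘ (⇑(MeasurableEquiv.toLp 2 (Fin d → ℝ)).symm ∘ ⇑b.repr) := by
    funext x
    have : b.repr x i0 = ⟪b i0, x⟫_ℝ := b.repr_apply_apply x i0
    simp only [Function.comp_apply]
    rw [show (MeasurableEquiv.toLp 2 (Fin d → ℝ)).symm (b.repr x) i0 = b.repr x i0 from rfl,
      this, hbu, real_inner_comm]
  rw [hrepr, ← Measure.map_map (measurable_pi_apply i0)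
    ((MeasurableEquiv.toLp 2 (Fin d → ℝ)).symm.measurable.comp b.repr.continuous.measurable),
    ← Measure.map_map (MeasurableEquiv.toLp 2 (Fin d → ℝ)).symm.measurable
      b.repr.continuous.measurable,
    aux_isometry_invariance d b.repr, stdGaussianE, MeasurableEquiv.map_symm_map]
  exact aux_marginal i0

end Aux

theorem stmt_7 {d : ℕ} (hd : 0 < d) {Y : Type*} [Fintype Y] [Nonempty Y] [DecidableEq Y]
    (ψ : Y → EuclideanSpace ℝ (Fin d))
    (ℓ : Y → Y → ℝ) (hℓ : ∀ y y', 0 ≤ ℓ y y' ∧ ℓ y y' ≤ 1)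
    (w : EuclideanSpace ℝ (Fin d)) (y yh : Y)
    (hmax : ∀ y' : Y, ⟪w, ψ yh⟫_ℝ ≥ ⟪w, ψ y'⟫_ℝ)
    (hne : y ≠ yh) (hψ : ψ y ≠ ψ yh) :
    (gaussianReal 0 1 {z | z > ⟪w, deltaFeat ψ y yh⟫_ℝ}).toReal * ℓ y yh =
      (stdGaussianE d {ε | ⟪w + ε, deltaFeat ψ y yh⟫_ℝ < 0}).toReal * ℓ y yh := by
  congr 1
  set u := deltaFeat ψ y yh with hu
  have hvne : ψ y - ψ yh ≠ 0 := sub_ne_zero.2 hψ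
  have hnorm : ‖u‖ = 1 := by
    rw [hu, deltaFeat, if_neg hne, norm_smul, Real.norm_eq_abs, abs_inv, abs_norm,
      inv_mul_cancel₀ (norm_ne_zero_iff.2 hvne)]
  set c := ⟪w, u⟫_ℝ with hc
  have hinner : Measurable fun x : EuclideanSpace ℝ (Fin d) => ⟪x, u⟫_ℝ :=
    (continuous_id.inner continuous_const).measurable
  have hset : {ε : EuclideanSpace ℝ (Fin d) | ⟪w + ε, u⟫_ℝ < 0}
      = (fun x => ⟪x, u⟫_ℝ) ⁻¹' (Set.Iio (-c)) := by
    ext ε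
    simp only [Set.mem_setOf_eq, Set.mem_preimage, Set.mem_Iio, inner_add_left, ← hc]
    constructor <;> intro h <;> linarith
  rw [hset, ← Measure.map_apply hinner measurableSet_Iio, aux_map_inner hd u hnorm]
  have hneg : (gaussianReal 0 1).map (fun x : ℝ => -1 * x) = gaussianReal 0 1 := by
    rw [gaussianReal_map_const_mul (-1)]
    have h1 : (⟨(-1 : ℝ) ^ 2, sq_nonneg _⟩ : NNReal) = 1 := by ext; norm_num
    rw [mul_zero, mul_one]; congr 1
  have hIoi : {z : ℝ | z > c} = (fun x : ℝ => -1 * x) ⁻¹' (Set.Iio (-c)) := by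
    ext z
    simp only [Set.mem_setOf_eq, Set.mem_preimage, Set.mem_Iio, gt_iff_lt]
    constructor <;> intro h <;> linarith
  rw [hIoi, ← Measure.map_apply (by fun_prop) measurableSet_Iio, hneg]
end

section
/- The probability that the perturbed prediction equals the unperturbed prediction is bounded by the orbit probability: Let h be a maximizer selection, let w ∈ EuclideanSpace ℝ (Fin d), and let y ∈ Y with y ≠ h(w) and ψ y ≠ ψ(h(w)). Then μ_d{ε : h(w + ε) = h(w)} ≤ μ₁{z : z > ⟪w, δψ(y, h(w))⟫}. -/
open MeasureTheory ProbabilityTheory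
open scoped InnerProductSpace ENNReal

namespace StdGaussAux

lemma map_withDensity_equiv {α β : Type*} [MeasurableSpace α] [MeasurableSpace β]
    (e : α ≃ᵐ β) (μ : Measure α) {ρ : β → ℝ≥0∞} (hρ : Measurable ρ) :
    (μ.withDensity (fun a => ρ (e a))).map e = (μ.map e).withDensity ρ := by
  ext s hs
  rw [Measure.map_apply e.measurable hs, withDensity_apply _ (e.measurable hs),
    withDensity_apply _ hs, setLIntegral_map hs hρ e.measurable]

lemma lintegral_pi_prod : ∀ {n : ℕ} (g : Fin n → ℝ → ℝ≥0∞), (∀ i, Measurable (g i)) →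
    ∫⁻ f, ∏ i, g i (f i) ∂(Measure.pi fun _ : Fin n => (volume : Measure ℝ)) =
      ∏ i, ∫⁻ x, g i x
  | 0, g, _ => by
    rw [Measure.pi_of_empty]
    simp
  | (n+1), g, hg => by
    have hMP := measurePreserving_piFinSuccAbove (fun _ : Fin (n+1) => (volume : Measure ℝ)) 0
    have hF : Measurable fun p : ℝ × (Fin n → ℝ) => g 0 p.1 * ∏ j, g j.succ (p.2 j) := by
      refine ((hg 0).comp measurable_fst).mul ?_
      exact Finset.measurable_prod _ fun j _ =>
        (hg j.succ).comp ((measurable_pi_apply j).comp measurable_snd)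
    have := hMP.lintegral_comp hF
    have hcomp : (fun f : Fin (n+1) → ℝ =>
        g 0 ((MeasurableEquiv.piFinSuccAbove (fun _ => ℝ) 0 f).1) *
          ∏ j, g j.succ ((MeasurableEquiv.piFinSuccAbove (fun _ => ℝ) 0 f).2 j))
        = fun f => ∏ i, g i (f i) := by
      funext f
      rw [Fin.prod_univ_succ]
      simp [MeasurableEquiv.piFinSuccAbove, Fin.tail]
    rw [hcomp] at this
    have hpm := lintegral_prod_mul (μ := (volume : Measure ℝ))
      (ν := Measure.pi fun _ : Fin n => (volume : Measure ℝ)) (f := g 0)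
      (g := fun v : Fin n → ℝ => ∏ j, g j.succ (v j)) ((hg 0).aemeasurable)
      (Finset.measurable_prod _ fun j _ =>
        (hg j.succ).comp (measurable_pi_apply j)).aemeasurable
    rw [this, hpm, lintegral_pi_prod (fun j => g j.succ) (fun j => hg j.succ),
      Fin.prod_univ_succ]


lemma pi_gauss_eq (n : ℕ) :
    (Measure.pi fun _ : Fin n => gaussianReal 0 1) =
      (Measure.pi fun _ : Fin n => (volume : Measure ℝ)).withDensity
        (fun f => ∏ i, gaussianPDF 0 1 (f i)) := by
  refine Measure.pi_eq fun s hs => ?_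
  rw [withDensity_apply _ (MeasurableSet.univ_pi hs),
    ← lintegral_indicator (MeasurableSet.univ_pi hs)]
  have hind : ∀ f : Fin n → ℝ,
      (Set.univ.pi s).indicator (fun f => ∏ i, gaussianPDF 0 1 (f i)) f
        = ∏ i, (s i).indicator (gaussianPDF 0 1) (f i) := by
    intro f
    by_cases hf : f ∈ Set.univ.pi s
    · rw [Set.indicator_of_mem hf]
      exact Finset.prod_congr rfl fun i _ =>
        (Set.indicator_of_mem (hf i trivial) _).symm
    · rw [Set.indicator_of_notMem hf]
      simp only [Set.mem_pi, Set.mem_univ, forall_true_left] at hf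
      push_neg at hf
      obtain ⟨i, hi⟩ := hf
      exact (Finset.prod_eq_zero (Finset.mem_univ i)
        (by rw [Set.indicator_of_notMem hi])).symm
  simp_rw [hind]
  rw [lintegral_pi_prod _ (fun i => (measurable_gaussianPDF 0 1).indicator (hs i))]
  refine Finset.prod_congr rfl fun i _ => ?_
  rw [lintegral_indicator (hs i), gaussianReal_of_var_ne_zero 0 one_ne_zero,
    withDensity_apply _ (hs i)]

lemma stdGaussianE_density_eq {d : ℕ} (x : EuclideanSpace ℝ (Fin d)) :
    (∏ i, gaussianPDF 0 1 (x i)) =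
      ENNReal.ofReal ((Real.sqrt (2 * Real.pi))⁻¹ ^ d * Real.exp (-‖x‖ ^ 2 / 2)) := by
  have h1 : ∀ i, gaussianPDF 0 1 (x i) =
      ENNReal.ofReal ((Real.sqrt (2 * Real.pi))⁻¹ * Real.exp (-(x i) ^ 2 / 2)) := by
    intro i
    rw [gaussianPDF, gaussianPDFReal]
    norm_num
  simp_rw [h1]
  rw [← ENNReal.ofReal_prod_of_nonneg (fun i _ => by positivity),
    Finset.prod_mul_distrib, Finset.prod_const, ← Real.exp_sum]
  congr 3
  · simp
  have hnorm : ‖x‖ ^ 2 = ∑ i, x i ^ 2 := by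
    rw [EuclideanSpace.norm_eq, Real.sq_sqrt (by positivity)]
    simp [sq_abs]
  rw [hnorm, ← Finset.sum_div, ← Finset.sum_neg_distrib]

lemma stdGaussianE_eq (d : ℕ) :
    stdGaussianE d = (volume : Measure (EuclideanSpace ℝ (Fin d))).withDensity
      (fun x => ∏ i, gaussianPDF 0 1 (x i)) := by
  rw [stdGaussianE, pi_gauss_eq]
  have hρ : Measurable fun x : EuclideanSpace ℝ (Fin d) => ∏ i, gaussianPDF 0 1 (x i) :=
    Finset.measurable_prod _ fun i _ =>
      (measurable_gaussianPDF 0 1).comp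
        ((measurable_pi_apply i).comp (MeasurableEquiv.toLp 2 (Fin d → ℝ)).symm.measurable)
  have := map_withDensity_equiv (MeasurableEquiv.toLp 2 (Fin d → ℝ))
    (Measure.pi fun _ : Fin d => (volume : Measure ℝ)) hρ
  rw [← volume_pi] at this ⊢
  rw [MeasurableEquiv.coe_toLp, (PiLp.volume_preserving_toLp (Fin d)).map_eq] at this
  exact this

lemma stdGaussianE_map_isometry {d : ℕ}
    (T : EuclideanSpace ℝ (Fin d) ≃ₗᵢ[ℝ] EuclideanSpace ℝ (Fin d)) :
    (stdGaussianE d).map T = stdGaussianE d := by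
  rw [stdGaussianE_eq]
  set ρ : EuclideanSpace ℝ (Fin d) → ℝ≥0∞ :=
    fun x => ∏ i, gaussianPDF 0 1 (x i) with hρdef
  have hρ : Measurable ρ :=
    Finset.measurable_prod _ fun i _ =>
      (measurable_gaussianPDF 0 1).comp
        ((measurable_pi_apply i).comp (MeasurableEquiv.toLp 2 (Fin d → ℝ)).symm.measurable)
  have hinv : (fun x => ρ (T x)) = ρ := by
    funext x
    simp only [hρdef, stdGaussianE_density_eq, T.norm_map]
  set M : EuclideanSpace ℝ (Fin d) ≃ᵐ EuclideanSpace ℝ (Fin d) :=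
    T.toHomeomorph.toMeasurableEquiv with hM
  have hcoe : ⇑M = ⇑T := rfl
  calc (volume.withDensity ρ).map T
      = (volume.withDensity (fun x => ρ (M x))).map M := by rw [hcoe, hinv]
    _ = (volume.map M).withDensity ρ := map_withDensity_equiv M volume hρ
    _ = volume.withDensity ρ := by rw [hcoe, T.measurePreserving.map_eq]

lemma stdGaussianE_coord {d : ℕ} (j : Fin d) (t : ℝ) :
    stdGaussianE d {x | x j ≤ t} = gaussianReal 0 1 (Set.Iic t) := by
  have hset : MeasurableSet {x : EuclideanSpace ℝ (Fin d) | x j ≤ t} := by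
    have : Measurable fun x : EuclideanSpace ℝ (Fin d) => x j :=
      (measurable_pi_apply j).comp (MeasurableEquiv.toLp 2 (Fin d → ℝ)).symm.measurable
    exact this measurableSet_Iic
  rw [stdGaussianE, Measure.map_apply (MeasurableEquiv.measurable _) hset]
  have hpre : (MeasurableEquiv.toLp 2 (Fin d → ℝ)) ⁻¹' {x | x j ≤ t}
      = Function.eval j ⁻¹' Set.Iic t := rfl
  rw [hpre, Set.eval_preimage, Measure.pi_pi]
  have happ : ∀ i : Fin d,
      gaussianReal 0 1 (Function.update (fun _ => Set.univ) j (Set.Iic t) i)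
        = Function.update (fun _ : Fin d => gaussianReal 0 1 Set.univ) j
            (gaussianReal 0 1 (Set.Iic t)) i := fun i =>
    Function.apply_update (fun _ s => gaussianReal 0 1 s) (fun _ => Set.univ) j (Set.Iic t) i
  simp_rw [happ]
  rw [Finset.prod_update_of_mem (Finset.mem_univ j)]
  simp

end StdGaussAux

open StdGaussAux in
theorem stmt_9 {d : ℕ} (hd : 0 < d) {Y : Type*} [Fintype Y] [Nonempty Y] [DecidableEq Y]
    [MeasurableSpace Y] [MeasurableSingletonClass Y]
    (ψ : Y → EuclideanSpace ℝ (Fin d))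
    (h : EuclideanSpace ℝ (Fin d) → Y) (hhm : Measurable h)
    (hmax : ∀ (v : EuclideanSpace ℝ (Fin d)) (y' : Y), ⟪v, ψ (h v)⟫_ℝ ≥ ⟪v, ψ y'⟫_ℝ)
    (w : EuclideanSpace ℝ (Fin d)) (y : Y)
    (hne : y ≠ h w) (hψ : ψ y ≠ ψ (h w)) :
    stdGaussianE d {ε | h (w + ε) = h w} ≤
      gaussianReal 0 1 {z | z > ⟪w, deltaFeat ψ y (h w)⟫_ℝ} := by
  classical
  set δ : EuclideanSpace ℝ (Fin d) := deltaFeat ψ y (h w) with hδ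
  have hvne : ψ y - ψ (h w) ≠ 0 := sub_ne_zero.mpr hψ
  have hδeq : δ = ‖ψ y - ψ (h w)‖⁻¹ • (ψ y - ψ (h w)) := by
    rw [hδ, deltaFeat, if_neg hne]
  have hδnorm : ‖δ‖ = 1 := by
    rw [hδeq, norm_smul, norm_inv, norm_norm,
      inv_mul_cancel₀ (norm_ne_zero_iff.mpr hvne)]
  set c : ℝ := ⟪w, δ⟫_ℝ with hc
  -- the event is contained in a half-space
  have hsub : {ε : EuclideanSpace ℝ (Fin d) | h (w + ε) = h w}
      ⊆ {ε | ⟪δ, ε⟫_ℝ ≤ -c} := by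
    intro ε hε
    simp only [Set.mem_setOf_eq] at hε ⊢
    have h1 : ⟪w + ε, ψ y⟫_ℝ ≤ ⟪w + ε, ψ (h w)⟫_ℝ := by
      have := hmax (w + ε) y
      rwa [hε] at this
    have h2 : ⟪w + ε, ψ y - ψ (h w)⟫_ℝ ≤ 0 := by
      rw [inner_sub_right]; linarith
    have h3 : ⟪w + ε, δ⟫_ℝ ≤ 0 := by
      rw [hδeq, real_inner_smul_right]
      exact mul_nonpos_of_nonneg_of_nonpos (by positivity) h2
    rw [inner_add_left] at h3
    have h4 : ⟪ε, δ⟫_ℝ ≤ -c := by rw [hc]; linarith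
    rwa [real_inner_comm] at h4
  -- an orthonormal basis whose 0-th vector is δ
  set j0 : Fin d := ⟨0, hd⟩ with hj0
  have horth : Orthonormal ℝ (Set.restrict {j0} (fun _ : Fin d => δ)) := by
    constructor
    · intro i; exact hδnorm
    · intro i j hij
      exact absurd (Subtype.ext ((Set.eq_of_mem_singleton i.2).trans
        (Set.eq_of_mem_singleton j.2).symm)) hij
  obtain ⟨B, hB⟩ := Orthonormal.exists_orthonormalBasis_extension_of_card_eq
    (by simp) horth
  have hBj : B j0 = δ := hB j0 (Set.mem_singleton _)
  have hhalf : {ε : EuclideanSpace ℝ (Fin d) | ⟪δ, ε⟫_ℝ ≤ -c}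
      = ⇑B.repr ⁻¹' {x : EuclideanSpace ℝ (Fin d) | x j0 ≤ -c} := by
    ext ε
    simp only [Set.mem_setOf_eq, Set.mem_preimage]
    rw [B.repr_apply_apply, hBj]
  have hsetm : MeasurableSet {x : EuclideanSpace ℝ (Fin d) | x j0 ≤ -c} := by
    have hm : Measurable fun x : EuclideanSpace ℝ (Fin d) => x j0 :=
      (measurable_pi_apply j0).comp (MeasurableEquiv.toLp 2 (Fin d → ℝ)).symm.measurable
    exact hm measurableSet_Iic
  -- the Gaussian reflection
  have hone : (NNReal.mk ((-1 : ℝ) ^ 2) (sq_nonneg _)) * 1 = 1 := by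
    ext; norm_num
  have hmap : (gaussianReal 0 1).map (fun z => (-1 : ℝ) * z) = gaussianReal 0 1 := by
    rw [gaussianReal_map_const_mul (-1 : ℝ), hone, mul_zero]
  have hIic : gaussianReal 0 1 (Set.Iic (-c)) = gaussianReal 0 1 (Set.Ici c) := by
    conv_lhs => rw [← hmap]
    rw [Measure.map_apply (measurable_const_mul _) measurableSet_Iic]
    congr 1
    ext z
    simp only [Set.mem_preimage, Set.mem_Iic, Set.mem_Ici, neg_one_mul, neg_le_neg_iff]
  have hatom : gaussianReal 0 1 ({c} : Set ℝ) = 0 :=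
    gaussianReal_absolutelyContinuous 0 one_ne_zero (measure_singleton c)
  calc stdGaussianE d {ε | h (w + ε) = h w}
      ≤ stdGaussianE d {ε | ⟪δ, ε⟫_ℝ ≤ -c} := measure_mono hsub
    _ = stdGaussianE d {x | x j0 ≤ -c} := by
        rw [hhalf, ← Measure.map_apply B.repr.continuous.measurable hsetm,
          stdGaussianE_map_isometry B.repr]
    _ = gaussianReal 0 1 (Set.Iic (-c)) := stdGaussianE_coord j0 (-c)
    _ = gaussianReal 0 1 (Set.Ici c) := hIic
    _ ≤ gaussianReal 0 1 (Set.Ioi c) + gaussianReal 0 1 ({c} : Set ℝ) := by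
        refine le_trans (measure_mono ?_) (measure_union_le _ _)
        intro z hz
        rcases lt_or_eq_of_le (Set.mem_Ici.mp hz) with h' | h'
        · exact Or.inl h'
        · exact Or.inr (by simp [← h'])
    _ = gaussianReal 0 1 {z | z > c} := by rw [hatom, add_zero]; rfl
end

section
/- Margin condition forces large perturbations to change the prediction: Let ψ assign distinct feature vectors to distinct labels, let h be a maximizer selection, let w ∈ EuclideanSpace ℝ (Fin d), and let η > 0. Assume that for every y' ≠ h(w), ⟪w, δψ(h(w), y')⟫ ≥ η. Then for every ε ∈ EuclideanSpace ℝ (Fin d) with h(w + ε) ≠ h(w), one has ⟪ε, δψ(h(w + ε), h(w))⟫ ≥ η, and consequently ‖ε‖ ≥ η. -/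
open MeasureTheory ProbabilityTheory
open scoped InnerProductSpace ENNReal

theorem stmt_10 {d : ℕ} (hd : 0 < d) {Y : Type*} [Fintype Y] [Nonempty Y] [DecidableEq Y]
    (ψ : Y → EuclideanSpace ℝ (Fin d)) (hψ : Function.Injective ψ)
    (h : EuclideanSpace ℝ (Fin d) → Y)
    (hmax : ∀ (v : EuclideanSpace ℝ (Fin d)) (y' : Y), ⟪v, ψ (h v)⟫_ℝ ≥ ⟪v, ψ y'⟫_ℝ)
    (w : EuclideanSpace ℝ (Fin d)) (η : ℝ) (hη : 0 < η)
    (hmargin : ∀ y' : Y, y' ≠ h w → ⟪w, deltaFeat ψ (h w) y'⟫_ℝ ≥ η) :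
    ∀ ε : EuclideanSpace ℝ (Fin d), h (w + ε) ≠ h w →
      ⟪ε, deltaFeat ψ (h (w + ε)) (h w)⟫_ℝ ≥ η ∧ ‖ε‖ ≥ η := by
  intro ε hne
  set y := h (w + ε) with hy
  set y0 := h w with hy0
  have hdiff : ψ y ≠ ψ y0 := fun hc => hne (hψ hc)
  have hnorm : (0:ℝ) < ‖ψ y - ψ y0‖ := by
    rwa [norm_pos_iff, sub_ne_zero]
  have hmarg := hmargin y hne
  rw [deltaFeat, if_neg (Ne.symm hne), real_inner_smul_right] at hmarg
  have h1 : ⟪w + ε, ψ y - ψ y0⟫_ℝ ≥ 0 := by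
    have := hmax (w + ε) y0
    rw [inner_sub_right]
    linarith
  rw [inner_add_left] at h1
  have h2 : ⟪w, ψ y0 - ψ y⟫_ℝ ≥ η * ‖ψ y - ψ y0‖ := by
    have hns : ‖ψ y0 - ψ y‖ = ‖ψ y - ψ y0‖ := norm_sub_rev _ _
    rw [hns] at hmarg
    calc ⟪w, ψ y0 - ψ y⟫_ℝ = ‖ψ y - ψ y0‖ * (‖ψ y - ψ y0‖⁻¹ * ⟪w, ψ y0 - ψ y⟫_ℝ) := by
          field_simp
      _ ≥ ‖ψ y - ψ y0‖ * η := by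
          exact mul_le_mul_of_nonneg_left hmarg hnorm.le
      _ = η * ‖ψ y - ψ y0‖ := mul_comm _ _
  have key : ⟪ε, deltaFeat ψ y y0⟫_ℝ ≥ η := by
    rw [deltaFeat, if_neg hne, real_inner_smul_right]
    have hεn : ⟪ε, ψ y - ψ y0⟫_ℝ ≥ η * ‖ψ y - ψ y0‖ := by
      have : ⟪w, ψ y - ψ y0⟫_ℝ = -⟪w, ψ y0 - ψ y⟫_ℝ := by
        rw [← inner_neg_right]; congr 1; abel
      linarith
    calc ‖ψ y - ψ y0‖⁻¹ * ⟪ε, ψ y - ψ y0⟫_ℝ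
        ≥ ‖ψ y - ψ y0‖⁻¹ * (η * ‖ψ y - ψ y0‖) := by
          exact mul_le_mul_of_nonneg_left hεn (inv_nonneg.mpr hnorm.le)
      _ = η := by field_simp
  refine ⟨key, ?_⟩
  have hcs := real_inner_le_norm ε (deltaFeat ψ y y0)
  have hdn : ‖deltaFeat ψ y y0‖ = 1 := by
    rw [deltaFeat, if_neg hne, norm_smul, norm_inv, norm_norm]
    field_simp
  rw [hdn, mul_one] at hcs
  linarith
end
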